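/- The candidate efficient influence function (5) for cATE(k) (the version leveraging non-concurrent controls) has mean zero (property underlying Theorem 3, equation (5)): define ψ' := Σ_{(w,e): 𝒫(W=w,E=e,V=1)>0} (μ_oc(1,w,e) − μ_all(0,w,e)) · p(w,e|V=1) and the random variable φ₂ := (1{V=1}/𝒫(V=1)) · (A/π(W,E)) · (Y − μ_oc(1,W,E)) − ((1−A)/(1−π_all(W,E))) · (ν(W,E)/𝒫(V=1)) · (Y − μ_all(0,W,E)) + (1{V=1}/𝒫(V=1)) · (μ_oc(1,W,E) − μ_all(0,W,E)) − ψ', where terms multiplied by 1{V=1} are set to 0 on {V=0} and terms multiplied by (1−A) are set to 0 on {A=1}. Then 𝔼[φ₂] = 0. -/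

import Mathlib

open MeasureTheory Finset

/-- Conditional expectation given an event: `𝔼[X | B] := 𝔼[X · 1_B] / 𝒫(B)`. -/
noncomputable def condMean {Ω : Type*} [MeasurableSpace Ω] (P : Measure Ω)
    (X : Ω → ℝ) (B : Set Ω) : ℝ :=
  (∫ ω, B.indicator X ω ∂P) / (P B).toReal

/-- The candidate efficient influence function (5) for `cATE(k)` (the version leveraging
non-concurrent controls) has mean zero (property underlying Theorem 3, equation (5)):
with `ψ' := Σ_{(w,e) : 𝒫(W=w,E=e,V=1)>0} (μ_oc(1,w,e) − μ_all(0,w,e)) · p(w,e|V=1)` and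
`φ₂ := (1{V=1}/𝒫(V=1)) · (A/π(W,E)) · (Y − μ_oc(1,W,E))
  − ((1−A)/(1−π_all(W,E))) · (ν(W,E)/𝒫(V=1)) · (Y − μ_all(0,W,E))
  + (1{V=1}/𝒫(V=1)) · (μ_oc(1,W,E) − μ_all(0,W,E)) − ψ'`
(terms multiplied by `1{V=1}` set to `0` on `{V=0}`, terms multiplied by `(1−A)` set to
`0` on `{A=1}`), one has `𝔼[φ₂] = 0`. -/

lemma key_condMean_int {Ω : Type*} [MeasurableSpace Ω] (P : MeasureTheory.Measure Ω)
    [MeasureTheory.IsFiniteMeasure P]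
    {Y : Ω → ℝ} (hY : MeasureTheory.Integrable Y P) {S : Set Ω} (hS : MeasurableSet S) (c : ℝ) :
    ∫ ω, S.indicator (fun ω' => c * (Y ω' - condMean P Y S)) ω ∂P = 0 := by
  have hm' : ∫ ω in S, Y ω ∂P = condMean P Y S * (P S).toReal := by
    by_cases h : (P S).toReal = 0
    · have h0 : P S = 0 := by
        simpa [ENNReal.toReal_eq_zero_iff, measure_ne_top] using h
      rw [h, mul_zero, Measure.restrict_eq_zero.mpr h0, integral_zero_measure]
    · rw [condMean, ← integral_indicator hS, div_mul_cancel₀ _ h]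
  rw [integral_indicator hS, integral_const_mul,
    integral_sub hY.integrableOn ((integrableOn_const_iff).mpr (Or.inr (measure_lt_top P S))),
    setIntegral_const, measureReal_def, hm', smul_eq_mul]
  ring

theorem eif_all_controls_mean_zero
    {Ω : Type*} [MeasurableSpace Ω] (P : Measure Ω) [IsProbabilityMeasure P]
    {𝓦 ℰ : Type*} [Fintype 𝓦] [Fintype ℰ] [Nonempty 𝓦] [Nonempty ℰ]
    [MeasurableSpace 𝓦] [MeasurableSingletonClass 𝓦]
    [MeasurableSpace ℰ] [MeasurableSingletonClass ℰ]
    (W : Ω → 𝓦) (E : Ω → ℰ) (V : Ω → Fin 2) (A : Ω → Fin 2) (Y : Ω → ℝ)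
    (hW : Measurable W) (hE : Measurable E) (hV : Measurable V) (hA : Measurable A)
    (hY : Integrable Y P)
    (hV1 : 0 < P {ω | V ω = 1})
    -- positivity of the treated arm among concurrent units
    (hpos1 : ∀ (w : 𝓦) (e : ℰ), 0 < P {ω | W ω = w ∧ E ω = e ∧ V ω = 1} →
      0 < P {ω | A ω = 1 ∧ W ω = w ∧ E ω = e ∧ V ω = 1})
    -- positivity of the shared control arm among all units
    (hpos0all : ∀ (w : 𝓦) (e : ℰ), 0 < P {ω | W ω = w ∧ E ω = e} →
      0 < P {ω | A ω = 0 ∧ W ω = w ∧ E ω = e})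
    -- by design, treatment is only assigned when available
    (hdesign : P {ω | A ω = 1 ∧ V ω = 0} = 0)
    -- the outcome regression among concurrent units
    (μoc : Fin 2 → 𝓦 → ℰ → ℝ)
    (hμoc : ∀ (a : Fin 2) (w : 𝓦) (e : ℰ), μoc a w e =
      condMean P Y {ω | A ω = a ∧ W ω = w ∧ E ω = e ∧ V ω = 1})
    -- the pooled outcome regression under control
    (μall : 𝓦 → ℰ → ℝ)
    (hμall : ∀ (w : 𝓦) (e : ℰ), μall w e =
      condMean P Y {ω | A ω = 0 ∧ W ω = w ∧ E ω = e})
    -- the propensity score among concurrent units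
    (π : 𝓦 → ℰ → ℝ)
    (hπ : ∀ (w : 𝓦) (e : ℰ), π w e =
      (P {ω | A ω = 1 ∧ W ω = w ∧ E ω = e ∧ V ω = 1}).toReal /
        (P {ω | W ω = w ∧ E ω = e ∧ V ω = 1}).toReal)
    -- the propensity score among all units
    (πall : 𝓦 → ℰ → ℝ)
    (hπall : ∀ (w : 𝓦) (e : ℰ), πall w e =
      (P {ω | A ω = 1 ∧ W ω = w ∧ E ω = e}).toReal /
        (P {ω | W ω = w ∧ E ω = e}).toReal)
    -- the availability probability ν(w,e) = 𝒫(V=1 | W=w, E=e)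
    (ν : 𝓦 → ℰ → ℝ)
    (hν : ∀ (w : 𝓦) (e : ℰ), ν w e =
      (P {ω | W ω = w ∧ E ω = e ∧ V ω = 1}).toReal /
        (P {ω | W ω = w ∧ E ω = e}).toReal)
    -- the estimand ψ' = cATE expressed with the pooled control regression
    (ψ' : ℝ)
    (hψ' : ψ' = ∑ w : 𝓦, ∑ e : ℰ,
      if 0 < P {ω | W ω = w ∧ E ω = e ∧ V ω = 1} then
        (μoc 1 w e - μall w e) *
          ((P {ω | W ω = w ∧ E ω = e ∧ V ω = 1}).toReal / (P {ω | V ω = 1}).toReal)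
      else 0)
    -- the candidate efficient influence function (5)
    (φ₂ : Ω → ℝ)
    (hφ₂ : ∀ ω, φ₂ ω =
      (if V ω = 1 then
          (1 / (P {ω' | V ω' = 1}).toReal) *
            (((A ω : ℕ) : ℝ) / π (W ω) (E ω)) * (Y ω - μoc 1 (W ω) (E ω))
        else 0) -
      (if A ω = 1 then 0 else
          ((1 - ((A ω : ℕ) : ℝ)) / (1 - πall (W ω) (E ω))) *
            (ν (W ω) (E ω) / (P {ω' | V ω' = 1}).toReal) *
            (Y ω - μall (W ω) (E ω))) +
      (if V ω = 1 then
          (1 / (P {ω' | V ω' = 1}).toReal) *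
            (μoc 1 (W ω) (E ω) - μall (W ω) (E ω))
        else 0) - ψ') :
    ∫ ω, φ₂ ω ∂P = 0 := by
  classical
  have mS1 : ∀ (w : 𝓦) (e : ℰ),
      MeasurableSet {ω | A ω = 1 ∧ W ω = w ∧ E ω = e ∧ V ω = 1} := fun w e =>
    (hA (measurableSet_singleton 1)).inter ((hW (measurableSet_singleton w)).inter
      ((hE (measurableSet_singleton e)).inter (hV (measurableSet_singleton 1))))
  have mS0 : ∀ (w : 𝓦) (e : ℰ),
      MeasurableSet {ω | A ω = 0 ∧ W ω = w ∧ E ω = e} := fun w e =>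
    (hA (measurableSet_singleton 0)).inter ((hW (measurableSet_singleton w)).inter
      (hE (measurableSet_singleton e)))
  have mS3 : ∀ (w : 𝓦) (e : ℰ),
      MeasurableSet {ω | W ω = w ∧ E ω = e ∧ V ω = 1} := fun w e =>
    (hW (measurableSet_singleton w)).inter ((hE (measurableSet_singleton e)).inter
      (hV (measurableSet_singleton 1)))
  set F1 : Ω → ℝ := fun ω => ∑ w : 𝓦, ∑ e : ℰ,
    ({ω' | A ω' = 1 ∧ W ω' = w ∧ E ω' = e ∧ V ω' = 1}).indicator
      (fun ω' => ((1 / (P {ω' | V ω' = 1}).toReal) * (1 / π w e)) * (Y ω' - μoc 1 w e)) ω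
    with hF1def
  set F2 : Ω → ℝ := fun ω => ∑ w : 𝓦, ∑ e : ℰ,
    ({ω' | A ω' = 0 ∧ W ω' = w ∧ E ω' = e}).indicator
      (fun ω' => ((1 / (1 - πall w e)) * (ν w e / (P {ω' | V ω' = 1}).toReal)) *
        (Y ω' - μall w e)) ω
    with hF2def
  set F3 : Ω → ℝ := fun ω => ∑ w : 𝓦, ∑ e : ℰ,
    ({ω' | W ω' = w ∧ E ω' = e ∧ V ω' = 1}).indicator
      (fun _ => (1 / (P {ω' | V ω' = 1}).toReal) * (μoc 1 w e - μall w e)) ω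
    with hF3def
  have hdecomp : ∀ ω, φ₂ ω = F1 ω - F2 ω + F3 ω - ψ' := by
    intro ω
    rw [hφ₂]
    have e1 : (if V ω = 1 then
          (1 / (P {ω' | V ω' = 1}).toReal) *
            (((A ω : ℕ) : ℝ) / π (W ω) (E ω)) * (Y ω - μoc 1 (W ω) (E ω))
        else 0) = F1 ω := by
      simp only [hF1def]
      by_cases hA1 : A ω = 1
      · by_cases hVc : V ω = 1
        · rw [if_pos hVc,
            Finset.sum_eq_single_of_mem (W ω) (Finset.mem_univ _)
              (fun x _ hx => Finset.sum_eq_zero fun e _ =>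
                Set.indicator_of_notMem (fun hmem => hx (hmem.2.1.symm)) _),
            Finset.sum_eq_single_of_mem (E ω) (Finset.mem_univ _)
              (fun x _ hx => Set.indicator_of_notMem (fun hmem => hx (hmem.2.2.1.symm)) _),
            Set.indicator_of_mem (show ω ∈ {ω' | A ω' = 1 ∧ W ω' = W ω ∧ E ω' = E ω ∧ V ω' = 1} from ⟨hA1, rfl, rfl, hVc⟩)]
          rw [hA1]
          norm_num
        · rw [if_neg hVc]
          symm
          exact Finset.sum_eq_zero fun w _ => Finset.sum_eq_zero fun e _ =>
            Set.indicator_of_notMem (fun hmem => hVc hmem.2.2.2) _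
      · have hA0 : A ω = 0 := by omega
        have h0 : (((A ω : ℕ) : ℝ)) = 0 := by rw [hA0]; norm_num
        rw [h0]
        have hL : (if V ω = 1 then
            (1 / (P {ω' | V ω' = 1}).toReal) * ((0:ℝ) / π (W ω) (E ω)) *
              (Y ω - μoc 1 (W ω) (E ω)) else 0) = 0 := by
          split <;> simp
        rw [hL]
        symm
        exact Finset.sum_eq_zero fun w _ => Finset.sum_eq_zero fun e _ =>
          Set.indicator_of_notMem (fun hmem => hA1 hmem.1) _
    have e2 : (if A ω = 1 then 0 else
          ((1 - ((A ω : ℕ) : ℝ)) / (1 - πall (W ω) (E ω))) *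
            (ν (W ω) (E ω) / (P {ω' | V ω' = 1}).toReal) *
            (Y ω - μall (W ω) (E ω))) = F2 ω := by
      simp only [hF2def]
      by_cases hA1 : A ω = 1
      · rw [if_pos hA1]
        symm
        exact Finset.sum_eq_zero fun w _ => Finset.sum_eq_zero fun e _ =>
          Set.indicator_of_notMem (fun hmem => absurd hmem.1 (by rw [hA1]; decide)) _
      · have hA0 : A ω = 0 := by omega
        rw [if_neg hA1,
          Finset.sum_eq_single_of_mem (W ω) (Finset.mem_univ _)
            (fun x _ hx => Finset.sum_eq_zero fun e _ =>
              Set.indicator_of_notMem (fun hmem => hx (hmem.2.1.symm)) _),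
          Finset.sum_eq_single_of_mem (E ω) (Finset.mem_univ _)
            (fun x _ hx => Set.indicator_of_notMem (fun hmem => hx (hmem.2.2.symm)) _),
          Set.indicator_of_mem (show ω ∈ {ω' | A ω' = 0 ∧ W ω' = W ω ∧ E ω' = E ω} from ⟨hA0, rfl, rfl⟩), hA0]
        norm_num
    have e3 : (if V ω = 1 then
          (1 / (P {ω' | V ω' = 1}).toReal) *
            (μoc 1 (W ω) (E ω) - μall (W ω) (E ω))
        else 0) = F3 ω := by
      simp only [hF3def]
      by_cases hVc : V ω = 1
      · rw [if_pos hVc,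
          Finset.sum_eq_single_of_mem (W ω) (Finset.mem_univ _)
            (fun x _ hx => Finset.sum_eq_zero fun e _ =>
              Set.indicator_of_notMem (fun hmem => hx (hmem.1.symm)) _),
          Finset.sum_eq_single_of_mem (E ω) (Finset.mem_univ _)
            (fun x _ hx => Set.indicator_of_notMem (fun hmem => hx (hmem.2.1.symm)) _),
          Set.indicator_of_mem (show ω ∈ {ω' | W ω' = W ω ∧ E ω' = E ω ∧ V ω' = 1} from ⟨rfl, rfl, hVc⟩)]
      · rw [if_neg hVc]
        symm
        exact Finset.sum_eq_zero fun w _ => Finset.sum_eq_zero fun e _ =>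
          Set.indicator_of_notMem (fun hmem => hVc hmem.2.2) _
    rw [e1, e2, e3]
  have hind : ∀ (c m : ℝ) {S : Set Ω}, MeasurableSet S →
      Integrable (fun ω => S.indicator (fun ω' => c * (Y ω' - m)) ω) P := by
    intro c m S hS
    exact ((hY.sub (integrable_const m)).const_mul c).indicator hS
  have hindc : ∀ (c : ℝ) {S : Set Ω}, MeasurableSet S →
      Integrable (fun ω => S.indicator (fun _ => c) ω) P := by
    intro c S hS
    exact (integrable_const c).indicator hS
  have hint1 : Integrable F1 P := by
    rw [hF1def]
    exact integrable_finset_sum _ fun w _ => integrable_finset_sum _ fun e _ =>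
      hind _ _ (mS1 w e)
  have hint2 : Integrable F2 P := by
    rw [hF2def]
    exact integrable_finset_sum _ fun w _ => integrable_finset_sum _ fun e _ =>
      hind _ _ (mS0 w e)
  have hint3 : Integrable F3 P := by
    rw [hF3def]
    exact integrable_finset_sum _ fun w _ => integrable_finset_sum _ fun e _ =>
      hindc _ (mS3 w e)
  have hI1 : ∫ ω, F1 ω ∂P = 0 := by
    simp only [hF1def]
    rw [integral_finset_sum _ fun w _ => integrable_finset_sum _ fun e _ =>
      hind _ _ (mS1 w e)]
    refine Finset.sum_eq_zero fun w _ => ?_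
    rw [integral_finset_sum _ fun e _ => hind _ _ (mS1 w e)]
    refine Finset.sum_eq_zero fun e _ => ?_
    rw [hμoc 1 w e]
    exact key_condMean_int P hY (mS1 w e) _
  have hI2 : ∫ ω, F2 ω ∂P = 0 := by
    simp only [hF2def]
    rw [integral_finset_sum _ fun w _ => integrable_finset_sum _ fun e _ =>
      hind _ _ (mS0 w e)]
    refine Finset.sum_eq_zero fun w _ => ?_
    rw [integral_finset_sum _ fun e _ => hind _ _ (mS0 w e)]
    refine Finset.sum_eq_zero fun e _ => ?_
    rw [hμall w e]
    exact key_condMean_int P hY (mS0 w e) _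
  have hI3 : ∫ ω, F3 ω ∂P = ψ' := by
    simp only [hF3def]
    rw [integral_finset_sum _ fun w _ => integrable_finset_sum _ fun e _ =>
      hindc _ (mS3 w e), hψ']
    refine Finset.sum_congr rfl fun w _ => ?_
    rw [integral_finset_sum _ fun e _ => hindc _ (mS3 w e)]
    refine Finset.sum_congr rfl fun e _ => ?_
    rw [integral_indicator_const _ (mS3 w e)]
    by_cases hp : 0 < P {ω | W ω = w ∧ E ω = e ∧ V ω = 1}
    · rw [if_pos hp, measureReal_def, smul_eq_mul]
      ring
    · have hp0 : P {ω | W ω = w ∧ E ω = e ∧ V ω = 1} = 0 := by simpa using hp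
      rw [if_neg hp, measureReal_def, hp0]
      simp
  have hintA : Integrable (fun ω => F1 ω - F2 ω) P := hint1.sub hint2
  have hintB : Integrable (fun ω => F1 ω - F2 ω + F3 ω) P := hintA.add hint3
  calc ∫ ω, φ₂ ω ∂P
      = ∫ ω, (F1 ω - F2 ω + F3 ω - ψ') ∂P :=
        integral_congr_ae (Filter.Eventually.of_forall hdecomp)
    _ = (∫ ω, (F1 ω - F2 ω + F3 ω) ∂P) - ∫ _ω, ψ' ∂P :=
        integral_sub hintB (integrable_const ψ')
    _ = ((∫ ω, F1 ω ∂P) - ∫ ω, F2 ω ∂P) + (∫ ω, F3 ω ∂P) - ∫ _ω, ψ' ∂P := by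
        rw [integral_add hintA hint3, integral_sub hint1 hint2]
    _ = 0 := by
        rw [hI1, hI2, hI3, integral_const]
        simp
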